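/- arXiv:0912.2577 — 4 statements merged into one kernel-verified Lean document; each statement's English description precedes it below -/
import Mathlib

section
/- Let g(ν) = ν^d + d·ν^{d-1}(1-ν) and suppose ν* ∈ (0,1) satisfies g(ν*) > ν*. If α ∈ (0,1) satisfies 1-α > ν*/g(ν*), and a sequence (ν_r) satisfies ν_0 = 1 and ν_r ≥ (1-α)·g(ν_{r-1}) for all r ≥ 1, then ν_r ≥ ν* for all r ≥ 0. -/
lemma gmono_aux (e : ℕ) :
    MonotoneOn (fun x : ℝ => x ^ (e + 3) + (e + 3 : ℝ) * x ^ (e + 2) * (1 - x))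
      (Set.Icc (0:ℝ) 1) := by
  have hderiv : ∀ x : ℝ, HasDerivAt
      (fun x : ℝ => x ^ (e + 3) + (e + 3 : ℝ) * x ^ (e + 2) * (1 - x))
      ((e + 3 : ℝ) * (e + 2 : ℝ) * x ^ (e + 1) * (1 - x)) x := by
    intro x
    have h := ((hasDerivAt_pow (e + 3) x).add
      ((((hasDerivAt_pow (e + 2) x).const_mul ((e + 3 : ℝ))).mul
        ((hasDerivAt_const x (1:ℝ)).sub (hasDerivAt_id x)))))
    refine h.congr_deriv ?_
    simp only [Pi.sub_apply, id_eq]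
    push_cast
    ring
  apply monotoneOn_of_deriv_nonneg (convex_Icc 0 1)
  · exact (Continuous.continuousOn (by continuity))
  · intro x hx
    exact (hderiv x).differentiableAt.differentiableWithinAt
  · intro x hx
    rw [interior_Icc] at hx
    rw [(hderiv x).deriv]
    have h1 : (0:ℝ) ≤ x ^ (e + 1) := pow_nonneg hx.1.le _
    have h2 : (0:ℝ) ≤ 1 - x := by linarith [hx.2]
    positivity

/-- If g(ν*) > ν* with ν* ∈ (0,1), α ∈ (0,1) with 1-α > ν*/g(ν*), and a
sequence (ν_r) of probabilities satisfies ν_0 = 1 and ν_r ≥ (1-α)·g(ν_{r-1}) for r ≥ 1,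
then ν_r ≥ ν* for all r, where g(ν) = ν^d + d·ν^{d-1}(1-ν). -/
theorem stmt2 (d : ℕ) (hd : 3 ≤ d) (νs α : ℝ) (ν : ℕ → ℝ)
    (hνs0 : 0 < νs) (hνs1 : νs < 1)
    (hg : νs ^ d + d * νs ^ (d - 1) * (1 - νs) > νs)
    (hα0 : 0 < α) (hα1 : α < 1)
    (hαg : 1 - α > νs / (νs ^ d + d * νs ^ (d - 1) * (1 - νs)))
    (h0 : ν 0 = 1) (hub : ∀ r, ν r ≤ 1)
    (hrec : ∀ r : ℕ, 1 ≤ r →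
      ν r ≥ (1 - α) * ((ν (r - 1)) ^ d + d * (ν (r - 1)) ^ (d - 1) * (1 - ν (r - 1)))) :
    ∀ r : ℕ, ν r ≥ νs := by
  obtain ⟨e, rfl⟩ : ∃ e, d = e + 3 := ⟨d - 3, by omega⟩
  have hexp : e + 3 - 1 = e + 2 := by omega
  rw [hexp] at hg hαg
  simp only [hexp] at hrec
  -- g, with casts normalized
  set G : ℝ → ℝ := fun x : ℝ => x ^ (e + 3) + (e + 3 : ℝ) * x ^ (e + 2) * (1 - x) with hG
  have hcast : ∀ x : ℝ, x ^ (e + 3) + ((e + 3 : ℕ) : ℝ) * x ^ (e + 2) * (1 - x) = G x := by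
    intro x; simp only [hG]; push_cast; ring
  rw [hcast] at hg hαg
  have hgpos : 0 < G νs := lt_trans hνs0 hg
  have hkey : νs < (1 - α) * G νs := by
    rw [gt_iff_lt, div_lt_iff₀ hgpos] at hαg
    linarith [hαg]
  intro r
  induction r with
  | zero => rw [h0]; linarith
  | succ n ih =>
    have h1 := hrec (n + 1) (by omega)
    simp only [Nat.add_sub_cancel] at h1
    rw [hcast] at h1
    have hmono : G νs ≤ G (ν n) :=
      gmono_aux e ⟨hνs0.le, hνs1.le⟩ ⟨le_trans hνs0.le ih, hub n⟩ ih
    have h2 : (1 - α) * G νs ≤ (1 - α) * G (ν n) :=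
      mul_le_mul_of_nonneg_left hmono (by linarith)
    linarith
end

section
/- Let Maj : {0,1,♯}^d → {0,1} (d odd) return the majority over non-♯ entries (coin flip on ties). Define the recursive majority against an adversary on the d-ary tree of height H: the root has state 0; a single site evolves without indels down a (d-2)-ary subtree where each edge flips the bit independently with probability p_s; the remaining 2 children at each internal node (and all their descendants' leaves) are adversarially set to 1; the output is the d-wise recursive majority of the leaf states. Then for every β > 0 there exists a constant C'' > 0 such that if (1-2p_s)² > C''·(log d)/d and d is sufficiently large, the probability that the recursive majority equals 0 is at least 1-β, uniformly in H. -/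
/-- Probability that Bin(n,r) = i. -/
noncomputable def binProb (n : ℕ) (r : ℝ) (i : ℕ) : ℝ :=
  (n.choose i : ℝ) * r ^ i * (1 - r) ^ (n - i)

/-- Probability that Bin(n,r) ≥ (d+1)/2 (i.e. at least a strict majority among d voters). -/
noncomputable def majTail (d n : ℕ) (r : ℝ) : ℝ :=
  ∑ j ∈ Finset.Icc ((d + 1) / 2) n, binProb n r j

/-- Recursive majority against an adversary on the d-ary tree: `(advMaj d ps h).1` (resp.
`.2`) is the probability that the d-wise recursive majority of the leaf states of the
height-h tree equals 0 given the root state is 0 (resp. 1), where a single site evolves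
down a (d-2)-ary subtree through binary symmetric channels with flip probability ps, and
2 adversarial children per node (together with all their leaves) are fixed to state 1.
With d odd, the node outputs 0 iff at least (d+1)/2 of its d children (of which 2 always
output 1) output 0. -/
noncomputable def advMaj (d : ℕ) (ps : ℝ) : ℕ → ℝ × ℝ
  | 0 => (1, 0)
  | h + 1 =>
      let q := advMaj d ps h
      (majTail d (d - 2) ((1 - ps) * q.1 + ps * q.2),
       majTail d (d - 2) ((1 - ps) * q.2 + ps * q.1))

lemma binProb_nonneg {n : ℕ} {r : ℝ} (hr0 : 0 ≤ r) (hr1 : r ≤ 1) (i : ℕ) :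
    0 ≤ binProb n r i := by
  have h1r : (0:ℝ) ≤ 1 - r := by linarith
  unfold binProb; positivity

lemma sum_binProb (n : ℕ) (r : ℝ) :
    ∑ j ∈ Finset.range (n+1), binProb n r j = 1 := by
  have key : ∑ j ∈ Finset.range (n+1), binProb n r j = (r + (1-r))^n := by
    rw [add_pow]
    exact Finset.sum_congr rfl fun j _ => by unfold binProb; ring
  rw [key, show r + (1-r) = 1 by ring, one_pow]

lemma lower_tail_le (n m : ℕ) (r θ : ℝ) (hθ0 : 0 < θ) (hθ1 : θ ≤ 1)
    (hr0 : 0 ≤ r) (hr1 : r ≤ 1) (hmn : m ≤ n + 1) :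
    θ ^ (m - 1) * ∑ j ∈ Finset.range m, binProb n r j ≤ (θ * r + (1 - r)) ^ n := by
  have h1r : (0:ℝ) ≤ 1 - r := by linarith
  calc θ ^ (m-1) * ∑ j ∈ Finset.range m, binProb n r j
      = ∑ j ∈ Finset.range m, θ ^ (m-1) * binProb n r j := by rw [Finset.mul_sum]
    _ ≤ ∑ j ∈ Finset.range m, θ ^ j * binProb n r j := by
        apply Finset.sum_le_sum
        intro j hj
        have hjm : j ≤ m - 1 := by
          simp only [Finset.mem_range] at hj; omega
        exact mul_le_mul_of_nonneg_right (pow_le_pow_of_le_one hθ0.le hθ1 hjm)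
          (binProb_nonneg hr0 hr1 j)
    _ ≤ ∑ j ∈ Finset.range (n+1), θ ^ j * binProb n r j := by
        apply Finset.sum_le_sum_of_subset_of_nonneg (Finset.range_subset_range.2 hmn)
        intro j _ _
        exact mul_nonneg (pow_nonneg hθ0.le j) (binProb_nonneg hr0 hr1 j)
    _ = (θ * r + (1 - r)) ^ n := by
        rw [add_pow]
        exact Finset.sum_congr rfl fun j _ => by unfold binProb; rw [mul_pow]; ring

set_option maxHeartbeats 1000000 in
lemma majTail_step (d : ℕ) (δ r : ℝ) (hd : 5 ≤ d) (hdo : Odd d)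
    (hδ0 : 0 < δ) (hδh : δ ≤ 1/2)
    (hδ2 : δ^2 > 100 * Real.log d / d)
    (hr : 1/2 + δ/2 ≤ r) (hr1 : r ≤ 1) :
    1 - 2 / (d:ℝ)^12 ≤ majTail d (d-2) r := by
  obtain ⟨a, ha⟩ := hdo
  have ha2 : 2 ≤ a := by omega
  have hm : (d+1)/2 = a+1 := by omega
  have hn : d - 2 = 2*a - 1 := by omega
  have hdR : (0:ℝ) < d := by positivity
  have hr0 : (0:ℝ) ≤ r := by linarith
  -- split the total probability
  have hone : ∑ j ∈ Finset.range (2*a), binProb (2*a-1) r j = 1 := by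
    have := sum_binProb (2*a-1) r
    rwa [show 2*a-1+1 = 2*a by omega] at this
  set L := ∑ j ∈ Finset.range (a+1), binProb (2*a-1) r j with hL
  have hmaj : majTail d (d-2) r = 1 - L := by
    have hsplit := Finset.sum_Ico_consecutive (binProb (2*a-1) r)
      (by omega : 0 ≤ a+1) (by omega : a+1 ≤ 2*a)
    rw [← Finset.range_eq_Ico, ← Finset.range_eq_Ico] at hsplit
    unfold majTail
    rw [hm, hn, show Finset.Icc (a+1) (2*a-1) = Finset.Ico (a+1) (2*a) by
      rw [← Finset.Ico_add_one_right_eq_Icc]; congr 1; omega]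
    linarith [hsplit, hone]
  rw [hmaj]
  -- Chernoff bound on L with θ = 1 - δ
  have hθ0 : (0:ℝ) < 1 - δ := by linarith
  have hch := lower_tail_le (2*a-1) (a+1) r (1-δ) hθ0 (by linarith) hr0 hr1 (by omega)
  rw [show (a+1)-1 = a by omega] at hch
  set u : ℝ := (1-δ)*r + (1-r) with hu
  have hu5 : (1:ℝ)/2 ≤ u := by
    have : r * δ ≤ δ := by nlinarith
    rw [hu]; nlinarith
  have hu1 : u ≤ 1 - δ/2 - δ^2/2 := by rw [hu]; nlinarith
  have hu0 : (0:ℝ) ≤ u := by linarith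
  -- L ≤ u^(2a-1) / (1-δ)^a
  have hpowpos : (0:ℝ) < (1-δ)^a := pow_pos hθ0 a
  have hLnonneg : 0 ≤ L :=
    Finset.sum_nonneg fun j _ => binProb_nonneg hr0 hr1 j
  have hstep1 : L ≤ u ^ (2*a-1) / (1-δ)^a := by
    rw [le_div_iff₀ hpowpos]; linarith [hch]
  -- u^(2a-1) ≤ 2 u^(2a)
  have hstep2 : u ^ (2*a-1) ≤ 2 * u ^ (2*a) := by
    have h2a : u ^ (2*a) = u ^ (2*a-1) * u := by
      rw [← pow_succ]; congr 1; omega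
    have hup : (0:ℝ) ≤ u ^ (2*a-1) := pow_nonneg hu0 _
    rw [h2a]; nlinarith
  -- key quadratic inequality
  have hδsq : δ^2 ≤ 1 := by nlinarith
  have hpoly : (1 - δ/2 - δ^2/2)^2 ≤ (1-δ) * (1 - δ^2/2) := by
    have h4 : δ^2*δ^2 ≤ δ^2*1 := mul_le_mul_of_nonneg_left hδsq (sq_nonneg δ)
    nlinarith [h4]
  have hA : u^2 ≤ (1-δ) * (1 - δ^2/2) := by
    have h1 : u^2 ≤ (1 - δ/2 - δ^2/2)^2 := pow_le_pow_left₀ hu0 hu1 2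
    linarith
  have hx0 : (0:ℝ) ≤ u^2 / (1-δ) := by positivity
  have hx1 : u^2 / (1-δ) ≤ 1 - δ^2/2 := by
    rw [div_le_iff₀ hθ0]; linarith [hA]
  have hstep3 : u ^ (2*a) / (1-δ)^a = (u^2/(1-δ))^a := by
    rw [div_pow, ← pow_mul]
  have hδq : (0:ℝ) ≤ 1 - δ^2/2 := by nlinarith
  have hstep4 : (u^2/(1-δ))^a ≤ (1 - δ^2/2)^a := pow_le_pow_left₀ hx0 hx1 a
  have hstep5 : (1 - δ^2/2)^a ≤ Real.exp (-(δ^2/2))^a := by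
    apply pow_le_pow_left₀ hδq
    linarith [Real.add_one_le_exp (-(δ^2/2))]
  have hstep6 : Real.exp (-(δ^2/2))^a = Real.exp (-(a*(δ^2/2))) := by
    rw [← Real.exp_nat_mul]; ring_nf
  -- exponent bound
  have hlog0 : (0:ℝ) ≤ Real.log d := Real.log_nonneg (by norm_num; omega)
  have haR : (d:ℝ) ≤ 3 * a := by
    have : (d:ℕ) ≤ 3*a := by omega
    exact_mod_cast this
  have hδ2' : δ^2 * d > 100 * Real.log d := by
    rw [gt_iff_lt, ← div_lt_iff₀ hdR] at *; exact hδ2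
  have hexp : 12 * Real.log d ≤ a * (δ^2/2) := by nlinarith [sq_nonneg δ]
  have hstep7 : Real.exp (-(a*(δ^2/2))) ≤ Real.exp (-(12 * Real.log d)) := by
    apply Real.exp_le_exp.2; linarith
  have hstep8 : Real.exp (-(12 * Real.log d)) = 1 / (d:ℝ)^12 := by
    rw [Real.exp_neg, show (12:ℝ) * Real.log d = (12:ℕ) * Real.log d by norm_num,
      Real.exp_nat_mul, Real.exp_log hdR, one_div]
  -- combine
  have hfinal : L ≤ 2 / (d:ℝ)^12 := by
    have h1 : L ≤ 2 * (u^2/(1-δ))^a := by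
      calc L ≤ u ^ (2*a-1) / (1-δ)^a := hstep1
        _ ≤ 2 * u ^ (2*a) / (1-δ)^a := by gcongr
        _ = 2 * (u^2/(1-δ))^a := by rw [mul_div_assoc, hstep3]
    calc L ≤ 2 * (u^2/(1-δ))^a := h1
      _ ≤ 2 * Real.exp (-(12 * Real.log d)) := by
          have := hstep4.trans (hstep5.trans_eq hstep6) |>.trans hstep7
          linarith
      _ = 2 / (d:ℝ)^12 := by rw [hstep8]; ring
  linarith

lemma majTail_nonneg (d n : ℕ) {r : ℝ} (hr0 : 0 ≤ r) (hr1 : r ≤ 1) : 0 ≤ majTail d n r :=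
  Finset.sum_nonneg fun j _ => binProb_nonneg hr0 hr1 j

lemma majTail_le_one (d n : ℕ) {r : ℝ} (hr0 : 0 ≤ r) (hr1 : r ≤ 1) : majTail d n r ≤ 1 := by
  rw [← sum_binProb n r]
  apply Finset.sum_le_sum_of_subset_of_nonneg
  · intro j hj
    simp only [Finset.mem_Icc, Finset.mem_range] at hj ⊢
    omega
  · intro j _ _; exact binProb_nonneg hr0 hr1 j

lemma advMaj_bounds (d : ℕ) {ps : ℝ} (h0 : 0 ≤ ps) (h1 : ps ≤ 1) :
    ∀ h, (0 ≤ (advMaj d ps h).1 ∧ (advMaj d ps h).1 ≤ 1) ∧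
         (0 ≤ (advMaj d ps h).2 ∧ (advMaj d ps h).2 ≤ 1)
  | 0 => by simp [advMaj]
  | (h+1) => by
    obtain ⟨⟨a1,a2⟩,⟨b1,b2⟩⟩ := advMaj_bounds d h0 h1 h
    have hr1 : 0 ≤ (1-ps) * (advMaj d ps h).1 + ps * (advMaj d ps h).2 := by nlinarith
    have hr2 : (1-ps) * (advMaj d ps h).1 + ps * (advMaj d ps h).2 ≤ 1 := by nlinarith
    have hs1 : 0 ≤ (1-ps) * (advMaj d ps h).2 + ps * (advMaj d ps h).1 := by nlinarith
    have hs2 : (1-ps) * (advMaj d ps h).2 + ps * (advMaj d ps h).1 ≤ 1 := by nlinarith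
    simp only [advMaj]
    exact ⟨⟨majTail_nonneg _ _ hr1 hr2, majTail_le_one _ _ hr1 hr2⟩,
           ⟨majTail_nonneg _ _ hs1 hs2, majTail_le_one _ _ hs1 hs2⟩⟩

set_option maxHeartbeats 1000000 in
/-- For every β > 0 there is a constant C'' > 0 such that if
(1-2p_s)² > C''·(log d)/d and d is large enough (and odd), then recursive majority
against an adversary reconstructs the root state 0 correctly with probability at least
1-β, uniformly in the height H. -/
theorem stmt12 (β : ℝ) (hβ : 0 < β) :
    ∃ C : ℝ, 0 < C ∧ ∃ d₀ : ℕ, ∀ d : ℕ, d₀ ≤ d → Odd d →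
      ∀ ps : ℝ, 0 ≤ ps → ps ≤ 1/2 → (1 - 2 * ps) ^ 2 > C * Real.log d / d →
        ∀ H : ℕ, (advMaj d ps H).1 ≥ 1 - β := by
  refine ⟨400, by norm_num, ⌈2/β⌉₊ + 5, ?_⟩
  intro d hd hodd ps hps0 hps1 hcond H
  have hd5 : 5 ≤ d := by omega
  have hd5R : (5:ℝ) ≤ d := by exact_mod_cast hd5
  have hdR : (0:ℝ) < d := by linarith
  have hd1R : (2:ℝ) ≤ d := by linarith
  have hlogpos : 0 < Real.log d := Real.log_pos (by linarith)
  have hlog2 : (1:ℝ)/2 ≤ Real.log d := by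
    have h2 := Real.log_le_log (by norm_num) hd1R
    have := Real.log_two_gt_d9
    linarith
  set δ : ℝ := (1 - 2*ps)/2 with hδdef
  have hδ2 : δ^2 > 100 * Real.log d / d := by
    have hq : δ^2 = (1 - 2*ps)^2/4 := by rw [hδdef]; ring
    rw [hq]
    have : 100 * Real.log d / d = (400 * Real.log d / d)/4 := by ring
    rw [this]
    linarith [hcond]
  have hδpos : 0 < δ := by
    have h1 : 0 < 100 * Real.log d / d := by positivity
    have h2 : 0 < δ^2 := by linarith [hδ2]
    have h3 : 0 ≤ δ := by rw [hδdef]; linarith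
    nlinarith
  have hδh : δ ≤ 1/2 := by rw [hδdef]; linarith
  set ε : ℝ := min (δ/2) β with hεdef
  have hεβ : ε ≤ β := min_le_right _ _
  have hεδ : ε ≤ δ/2 := min_le_left _ _
  have hε0 : 0 < ε := lt_min (by linarith) hβ
  -- the error bound 2/d^12 is below ε
  have hdpow : (d:ℝ) ≤ (d:ℝ)^12 := by
    calc (d:ℝ) = (d:ℝ)^1 := (pow_one _).symm
      _ ≤ (d:ℝ)^12 := pow_le_pow_right₀ (by linarith) (by norm_num)
  have hεbound : 2 / (d:ℝ)^12 ≤ ε := by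
    apply le_min
    · -- 2/d^12 ≤ δ/2 : since δ ≥ 10/d
      have hδ50 : (50:ℝ)/d ≤ δ^2 := by
        have h : (50:ℝ)/d ≤ 100 * Real.log d / d := by
          gcongr
          linarith
        linarith [hδ2]
      have hδ50' : (50:ℝ) ≤ δ^2 * d := by
        rw [div_le_iff₀ hdR] at hδ50; linarith
      have hδd' : (10:ℝ) ≤ δ * d := by
        nlinarith [hδ50', hd5R, mul_pos hδpos hdR]
      rw [div_le_iff₀ (by positivity : (0:ℝ) < (d:ℝ)^12)]
      nlinarith [hδd', mul_nonneg hδpos.le (sub_nonneg.2 hdpow)]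
    · -- 2/d^12 ≤ β
      have hceil : (2/β : ℝ) ≤ (⌈2/β⌉₊ : ℝ) := Nat.le_ceil _
      have hcd : (2/β : ℝ) ≤ d := by
        have : ((⌈2/β⌉₊ + 5 : ℕ) : ℝ) ≤ d := by exact_mod_cast hd
        push_cast at this
        linarith
      have h2d : 2/(d:ℝ) ≤ β := by
        rw [div_le_iff₀ hdR]
        rw [div_le_iff₀ hβ] at hcd
        linarith
      have : 2/(d:ℝ)^12 ≤ 2/d := by
        apply div_le_div_of_nonneg_left (by norm_num) hdR hdpow
      linarith
  have hps1' : ps ≤ 1 := by linarith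
  -- the invariant
  have key : ∀ H, 1 - ε ≤ (advMaj d ps H).1 := by
    intro H
    induction H with
    | zero =>
        show 1 - ε ≤ (advMaj d ps 0).1
        simp only [advMaj]
        linarith
    | succ h ih =>
        obtain ⟨⟨a1, a2⟩, ⟨b1, b2⟩⟩ := advMaj_bounds d hps0 hps1' h
        have hadv : (advMaj d ps (h+1)).1
            = majTail d (d-2) ((1-ps) * (advMaj d ps h).1 + ps * (advMaj d ps h).2) := by
          simp only [advMaj]
        rcases hxy : advMaj d ps h with ⟨x, y⟩
        rw [hxy] at a1 a2 b1 b2 ih hadv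
        simp only at a1 a2 b1 b2 ih hadv
        set r : ℝ := (1-ps) * x + ps * y with hrdef
        have hr1 : r ≤ 1 := by rw [hrdef]; nlinarith
        have hrlow : 1/2 + δ/2 ≤ r := by
          have hps : ps = 1/2 - δ := by rw [hδdef]; ring
          have hq1 : (0:ℝ) ≤ (1 - ps) * (x - (1 - ε)) :=
            mul_nonneg (by linarith) (by linarith)
          have hq2 : (0:ℝ) ≤ ps * y := mul_nonneg hps0 b1
          have hεδ2 : ε * (1/2 + δ) ≤ δ/2 := by nlinarith
          rw [hrdef]
          nlinarith
        have hmt := majTail_step d δ r hd5 hodd hδpos hδh hδ2 hrlow hr1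
        rw [hadv]
        linarith
  have := key H
  have := hεβ
  linarith
end

section
/- Consider a branching-type process on a d-ary tree of height H where each internal node is independently 'radioactive' with probability at most α. Call a node r-stable if it is not radioactive and at least d-1 of its children are r-stable (leaves are r-stable). If ν* ∈ (0,1) satisfies ν*^d + d·ν*^{d-1}(1-ν*) > ν* and (1-α)·(ν*^d + d·ν*^{d-1}(1-ν*)) ≥ ν*, then the root is the father of a (d-1)-ary stable subtree with probability at least ν*. -/
open MeasureTheory ProbabilityTheory

/-- `stableAux d H R ω fuel j path` decides whether the node at depth `j` (reached by
`path`) of the d-ary tree of height `H` is stable: leaves (depth H) are stable, and an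
internal node is stable iff it is not radioactive (`R` gives the radioactivity
indicators) and at least d-1 of its children are stable. `fuel` bounds the recursion
depth (call with `fuel = H`, `j = 0`). -/
def stableAux {Ω : Type*} (d H : ℕ)
    (R : (Σ j : Fin H, (Fin (j : ℕ) → Fin d)) → Ω → Bool) (ω : Ω) :
    (fuel : ℕ) → (j : ℕ) → (Fin j → Fin d) → Bool
  | 0, _, _ => true
  | fuel + 1, j, path =>
      if h : j < H then
        !(R ⟨⟨j, h⟩, path⟩ ω) &&
          decide (d - 1 ≤ (Finset.univ.filter fun c : Fin d =>
            stableAux d H R ω fuel (j + 1) (Fin.snoc path c) = true).card)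
      else true

abbrev TIdx (d H : ℕ) := (Σ j : Fin H, (Fin (j : ℕ) → Fin d))

def stableData (d H : ℕ) (data : TIdx d H → Bool) :
    (fuel : ℕ) → (j : ℕ) → (Fin j → Fin d) → Bool
  | 0, _, _ => true
  | fuel + 1, j, path =>
      if h : j < H then
        !(data ⟨⟨j, h⟩, path⟩) &&
          decide (d - 1 ≤ (Finset.univ.filter fun c : Fin d =>
            stableData d H data fuel (j + 1) (Fin.snoc path c) = true).card)
      else true

lemma stableAux_eq {Ω : Type*} (d H : ℕ) (R : TIdx d H → Ω → Bool) (ω : Ω) :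
    ∀ fuel j path, stableAux d H R ω fuel j path
      = stableData d H (fun v => R v ω) fuel j path := by
  intro fuel
  induction fuel with
  | zero => intro j path; rfl
  | succ fuel IH =>
    intro j path
    simp only [stableAux, stableData, IH]

def subtree (d H : ℕ) (fuel j : ℕ) (path : Fin j → Fin d) : Finset (TIdx d H) :=
  Finset.univ.filter (fun v => j ≤ (v.1 : ℕ) ∧ (v.1 : ℕ) < j + fuel ∧
      ∀ (k : Fin j) (h2 : (k : ℕ) < (v.1 : ℕ)), v.2 ⟨k, h2⟩ = path k)

lemma mem_subtree {d H : ℕ} {fuel j : ℕ} {path : Fin j → Fin d} {v : TIdx d H} :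
    v ∈ subtree d H fuel j path ↔ j ≤ (v.1 : ℕ) ∧ (v.1 : ℕ) < j + fuel ∧
      ∀ (k : Fin j) (h2 : (k : ℕ) < (v.1 : ℕ)), v.2 ⟨k, h2⟩ = path k := by
  simp [subtree]

lemma subtree_child_subset {d H : ℕ} {fuel j : ℕ} {path : Fin j → Fin d} (c : Fin d) :
    subtree d H fuel (j + 1) (Fin.snoc path c) ⊆ subtree d H (fuel + 1) j path := by
  intro v hv
  rw [mem_subtree] at hv ⊢
  obtain ⟨h1, h2, h3⟩ := hv
  refine ⟨by omega, by omega, fun k hk2 => ?_⟩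
  have := h3 ⟨(k : ℕ), by omega⟩ hk2
  rw [this]
  have : (⟨(k : ℕ), by omega⟩ : Fin (j + 1)) = Fin.castSucc k := rfl
  rw [this, Fin.snoc_castSucc]

lemma subtree_coord {d H : ℕ} {fuel j : ℕ} {path : Fin j → Fin d} {c : Fin d} {v : TIdx d H}
    (hv : v ∈ subtree d H fuel (j + 1) (Fin.snoc path c)) (hj : j < (v.1 : ℕ)) :
    v.2 ⟨j, hj⟩ = c := by
  rw [mem_subtree] at hv
  have := hv.2.2 ⟨j, by omega⟩ hj
  rw [this]
  have : (⟨j, by omega⟩ : Fin (j + 1)) = Fin.last j := rfl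
  rw [this, Fin.snoc_last]

lemma node_mem_subtree {d H : ℕ} {fuel j : ℕ} {path : Fin j → Fin d} (h : j < H) :
    (⟨⟨j, h⟩, path⟩ : TIdx d H) ∈ subtree d H (fuel + 1) j path := by
  rw [mem_subtree]
  refine ⟨le_refl _, by simp, fun k h2 => ?_⟩
  congr

lemma stableData_congr {d H : ℕ} {data data' : TIdx d H → Bool} :
    ∀ (fuel j : ℕ) (path : Fin j → Fin d),
      (∀ v ∈ subtree d H fuel j path, data v = data' v) →
      stableData d H data fuel j path = stableData d H data' fuel j path := by
  intro fuel
  induction fuel with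
  | zero => intro j path _; rfl
  | succ fuel IH =>
    intro j path hagree
    simp only [stableData]
    by_cases h : j < H
    · rw [dif_pos h, dif_pos h]
      have hnode : data ⟨⟨j, h⟩, path⟩ = data' ⟨⟨j, h⟩, path⟩ :=
        hagree _ (node_mem_subtree h)
      have hc : ∀ c : Fin d, stableData d H data fuel (j + 1) (Fin.snoc path c)
          = stableData d H data' fuel (j + 1) (Fin.snoc path c) := fun c =>
        IH _ _ (fun v hv => hagree v (subtree_child_subset c hv))
      rw [hnode]
      simp only [hc]
    · rw [dif_neg h, dif_neg h]

noncomputable def hFun {d : ℕ} (q : Fin d → ℝ) : ℝ :=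
  (∏ c, q c) + ∑ c, (1 - q c) * ∏ c' ∈ Finset.univ.erase c, q c'

lemma hFun_update {d : ℕ} (q : Fin d → ℝ) (a : Fin d) (x : ℝ) :
    hFun (Function.update q a x)
      = (∏ c' ∈ Finset.univ.erase a, q c')
        + x * ∑ c ∈ Finset.univ.erase a,
            (1 - q c) * ∏ c' ∈ (Finset.univ.erase a).erase c, q c' := by
  unfold hFun
  rw [Finset.prod_update_of_mem (Finset.mem_univ a), Finset.sdiff_singleton_eq_erase]
  rw [← Finset.sum_erase_add _ _ (Finset.mem_univ a)]
  rw [Function.update_self]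
  have h1 : ∏ c' ∈ Finset.univ.erase a, Function.update q a x c'
      = ∏ c' ∈ Finset.univ.erase a, q c' :=
    Finset.prod_congr rfl fun c hc => Function.update_of_ne (Finset.ne_of_mem_erase hc) _ _
  have h2 : ∀ c ∈ Finset.univ.erase a,
      (1 - Function.update q a x c) * ∏ c' ∈ Finset.univ.erase c, Function.update q a x c'
      = x * ((1 - q c) * ∏ c' ∈ (Finset.univ.erase c).erase a, q c') := by
    intro c hc
    have hca : c ≠ a := Finset.ne_of_mem_erase hc
    rw [Function.update_of_ne hca]
    rw [Finset.prod_update_of_mem (Finset.mem_erase.mpr ⟨hca.symm, Finset.mem_univ a⟩),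
      Finset.sdiff_singleton_eq_erase]
    ring
  rw [Finset.sum_congr rfl h2, h1, ← Finset.mul_sum]
  have h3 : ∀ c ∈ Finset.univ.erase a,
      (1 - q c) * ∏ c' ∈ (Finset.univ.erase c).erase a, q c'
      = (1 - q c) * ∏ c' ∈ (Finset.univ.erase a).erase c, q c' := by
    intro c hc
    rw [Finset.erase_right_comm]
  rw [Finset.sum_congr rfl h3]
  ring

lemma hFun_mono {d : ℕ} (ν : ℝ) (hν0 : 0 ≤ ν) (hν1 : ν ≤ 1)
    (p : Fin d → ℝ) (hp1 : ∀ c, ν ≤ p c) (hp2 : ∀ c, p c ≤ 1) :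
    hFun (fun _ : Fin d => ν) ≤ hFun p := by
  have key : ∀ A : Finset (Fin d),
      hFun (fun _ : Fin d => ν) ≤ hFun (fun c => if c ∈ A then p c else ν) := by
    intro A
    induction A using Finset.induction_on with
    | empty => simp
    | @insert a A ha IH =>
      set q : Fin d → ℝ := fun c => if c ∈ A then p c else ν with hq
      have hq0 : ∀ c, 0 ≤ q c := fun c => by
        by_cases h : c ∈ A <;> simp [hq, h] <;> [exact le_trans hν0 (hp1 c); exact hν0]
      have hq1 : ∀ c, q c ≤ 1 := fun c => by
        by_cases h : c ∈ A <;> simp [hq, h] <;> [exact hp2 c; exact hν1]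
      have step1 : (fun c => if c ∈ insert a A then p c else ν) = Function.update q a (p a) := by
        funext c
        by_cases h : c = a
        · subst h; simp [Function.update_self, hq]
        · simp [Function.update_of_ne h, hq, h]
      have step2 : q = Function.update q a ν := by
        funext c
        by_cases h : c = a
        · subst h; simp [Function.update_self, hq, ha]
        · simp [Function.update_of_ne h]
      rw [step1]
      refine le_trans IH ?_
      conv_lhs => rw [step2]
      rw [hFun_update, hFun_update]
      have hK : 0 ≤ ∑ c ∈ Finset.univ.erase a,
          (1 - q c) * ∏ c' ∈ (Finset.univ.erase a).erase c, q c' := by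
        refine Finset.sum_nonneg fun c _ => mul_nonneg (by linarith [hq1 c])
          (Finset.prod_nonneg fun c' _ => hq0 c')
      have := hp1 a
      nlinarith [hK]
  have := key Finset.univ
  simpa using this

lemma hFun_const {d : ℕ} (ν : ℝ) :
    hFun (fun _ : Fin d => ν) = ν ^ d + d * ν ^ (d - 1) * (1 - ν) := by
  unfold hFun
  simp only [Finset.prod_const, Finset.card_erase_of_mem (Finset.mem_univ _),
    Finset.card_univ, Fintype.card_fin]
  rw [Finset.sum_const]
  simp only [Finset.card_univ, Fintype.card_fin, nsmul_eq_mul]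
  ring

lemma indep_prod {Ω : Type*} [MeasureSpace Ω] [IsProbabilityMeasure (ℙ : Measure Ω)]
    {ι' : Type*} (R : ι' → Ω → Bool) (hmeas : ∀ i, Measurable (R i))
    (hindep : iIndepFun R ℙ)
    {κ : Type*} [DecidableEq κ] (S : κ → Finset ι')
    (hdisj : ∀ k k', k ≠ k' → Disjoint (S k) (S k'))
    (E : κ → Set Ω)
    (hE : ∀ k, ∃ T : Set ((v : (S k : Finset ι')) → Bool),
      E k = (fun ω (v : (S k : Finset ι')) => R v.1 ω) ⁻¹' T)
    (T : Finset κ) :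
    ℙ (⋂ k ∈ T, E k) = ∏ k ∈ T, ℙ (E k) := by
  classical
  choose Ts hTs using hE
  induction T using Finset.induction_on with
  | empty => simp
  | @insert k0 T hk0 IH =>
    rw [Finset.set_biInter_insert, Finset.prod_insert hk0]
    set U := T.biUnion S with hU
    have hdU : Disjoint (S k0) U := by
      rw [hU, Finset.disjoint_biUnion_right]
      exact fun k hk => hdisj k0 k (fun h => hk0 (h ▸ hk))
    have hIF : IndepFun (fun ω (i : (S k0 : Finset ι')) => R i.1 ω)
        (fun ω (i : (U : Finset ι')) => R i.1 ω) ℙ :=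
      hindep.indepFun_finset (S k0) U hdU hmeas
    set W : Set ((i : (U : Finset ι')) → Bool) :=
      {x | ∀ k, ∀ hk : k ∈ T, (fun v : (S k : Finset ι') =>
        x ⟨v.1, Finset.mem_biUnion.mpr ⟨k, hk, v.2⟩⟩) ∈ Ts k} with hWdef
    have hW : (fun ω (i : (U : Finset ι')) => R i.1 ω) ⁻¹' W = ⋂ k ∈ T, E k := by
      ext ω
      simp only [Set.mem_preimage, Set.mem_iInter, hWdef, Set.mem_setOf_eq]
      refine forall_congr' fun k => forall_congr' fun hk => ?_
      rw [hTs k, Set.mem_preimage]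
    have hmi := (indepFun_iff_measure_inter_preimage_eq_mul.mp hIF) (Ts k0) W
      .of_discrete .of_discrete
    rw [hTs k0, ← hW, hmi, hW, ← hTs k0, IH]

lemma step_bound {Ω : Type*} [MeasureSpace Ω] [IsProbabilityMeasure (ℙ : Measure Ω)]
    {ι' : Type*} (d : ℕ)
    (R : ι' → Ω → Bool) (hmeas : ∀ i, Measurable (R i))
    (hindep : iIndepFun R ℙ)
    (n : ι') (S : Fin d → Finset ι') (hn : ∀ c, n ∉ S c)
    (hdisj : ∀ c c', c ≠ c' → Disjoint (S c) (S c'))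
    (Y : Fin d → Ω → Bool)
    (hrep : ∀ c, ∃ T : Set ((v : (S c : Finset ι')) → Bool),
      {ω | Y c ω = true} = (fun ω (v : (S c : Finset ι')) => R v.1 ω) ⁻¹' T)
    (α νs : ℝ) (hα0 : 0 ≤ α) (hα1 : α ≤ 1) (hνs0 : 0 < νs) (hνs1 : νs < 1)
    (hrec : (1 - α) * (νs ^ d + d * νs ^ (d - 1) * (1 - νs)) ≥ νs)
    (hα : ℙ {ω | R n ω = true} ≤ ENNReal.ofReal α)
    (hY : ∀ c, ENNReal.ofReal νs ≤ ℙ {ω | Y c ω = true}) :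
    ENNReal.ofReal νs ≤
      ℙ {ω | R n ω = false ∧ d - 1 ≤ (Finset.univ.filter fun c => Y c ω = true).card} := by
  classical
  choose Tc hTc using hrep
  -- extended index family
  set S' : Option (Fin d) → Finset ι' := fun o => o.elim {n} S with hS'
  have hdisj' : ∀ o o', o ≠ o' → Disjoint (S' o) (S' o') := by
    intro o o' hoo
    match o, o' with
    | none, none => exact absurd rfl hoo
    | none, some c => exact Finset.disjoint_singleton_left.mpr (hn c)
    | some c, none => exact (Finset.disjoint_singleton_left.mpr (hn c)).symm
    | some c, some c' => exact hdisj c c' (fun e => hoo (by rw [e]))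
  set E : (Fin d → Bool) → Option (Fin d) → Set Ω := fun b o =>
    o.elim {ω | R n ω = false} (fun c => {ω | Y c ω = b c}) with hE
  have hEnone : ∀ b, E b none = {ω | R n ω = false} := fun b => rfl
  have hEsome : ∀ b c, E b (some c) = {ω | Y c ω = b c} := fun b c => rfl
  have hEsomeT : ∀ (b : Fin d → Bool) c, b c = true → E b (some c) = {ω | Y c ω = true} := by
    intro b c hbc; rw [hEsome]; ext ω; simp [hbc]
  have hEsomeF : ∀ (b : Fin d → Bool) c, b c = false → E b (some c) = {ω | Y c ω = true}ᶜ := by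
    intro b c hbc; rw [hEsome]; ext ω
    simp only [Set.mem_setOf_eq, Set.mem_compl_iff, hbc]
    cases Y c ω <;> simp
  have hrep' : ∀ (b : Fin d → Bool) o, ∃ T : Set ((v : (S' o : Finset ι')) → Bool),
      E b o = (fun ω (v : (S' o : Finset ι')) => R v.1 ω) ⁻¹' T := by
    intro b o
    match o with
    | none =>
      exact ⟨{x | x ⟨n, Finset.mem_singleton_self n⟩ = false}, rfl⟩
    | some c =>
      cases hbc : b c with
      | true => exact ⟨Tc c, by rw [hEsomeT b c hbc]; exact hTc c⟩
      | false =>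
        refine ⟨(Tc c)ᶜ, ?_⟩
        rw [hEsomeF b c hbc, hTc c]
        rfl
  have hZ : ∀ o, Measurable (fun ω (v : (S' o : Finset ι')) => R v.1 ω) :=
    fun o => measurable_pi_lambda _ fun v => hmeas v.1
  have hEmeas : ∀ b o, MeasurableSet (E b o) := by
    intro b o
    obtain ⟨T, hT⟩ := hrep' b o
    rw [hT]
    exact (hZ o) .of_discrete
  -- atoms
  set A : (Fin d → Bool) → Set Ω := fun b => {ω | R n ω = false ∧ ∀ c, Y c ω = b c} with hA
  have hAE : ∀ b, A b = ⋂ o, E b o := by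
    intro b; ext ω
    simp only [hA, Set.mem_setOf_eq, Set.mem_iInter, Option.forall]
    exact Iff.rfl
  have hAmeas : ∀ b, MeasurableSet (A b) := fun b =>
    (hAE b) ▸ MeasurableSet.iInter (fun o => hEmeas b o)
  have hAprod : ∀ b, ℙ (A b) = ℙ (E b none) * ∏ c, ℙ (E b (some c)) := by
    intro b
    have h1 : ℙ (⋂ o ∈ (Finset.univ : Finset (Option (Fin d))), E b o)
        = ∏ o, ℙ (E b o) :=
      indep_prod R hmeas hindep S' hdisj' (E b) (hrep' b) Finset.univ
    have h2 : ⋂ o ∈ (Finset.univ : Finset (Option (Fin d))), E b o = ⋂ o, E b o := by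
      simp
    rw [hAE b, ← h2, h1, Fintype.prod_option]
  -- decomposition of the target event
  set Bset : Finset (Fin d → Bool) :=
    Finset.univ.filter (fun b => d - 1 ≤ (Finset.univ.filter fun c => b c = true).card)
    with hBset
  have hfull : {ω | R n ω = false ∧ d - 1 ≤ (Finset.univ.filter fun c => Y c ω = true).card}
      = ⋃ b ∈ Bset, A b := by
    ext ω
    simp only [Set.mem_setOf_eq, Set.mem_iUnion, hBset, Finset.mem_filter, Finset.mem_univ,
      true_and, hA]
    constructor
    · rintro ⟨h1, h2⟩
      exact ⟨fun c => Y c ω, h2, h1, fun c => rfl⟩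
    · rintro ⟨b, hb, h1, h2⟩
      refine ⟨h1, ?_⟩
      have : (Finset.univ.filter fun c => Y c ω = true)
          = (Finset.univ.filter fun c => b c = true) := by
        apply Finset.filter_congr
        intro c _
        rw [h2 c]
      rw [this]; exact hb
  have hdisjA : (Bset : Set (Fin d → Bool)).PairwiseDisjoint A := by
    intro b hb b' hb' hne
    rw [Function.onFun, Set.disjoint_left]
    intro ω hω hω'
    exact hne (funext fun c => (hω.2 c).symm.trans (hω'.2 c))
  -- real quantities
  set aR : ℝ := (ℙ {ω | R n ω = false}).toReal with haRdef
  set p : Fin d → ℝ := fun c => (ℙ {ω | Y c ω = true}).toReal with hp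
  have hYmeas : ∀ c, MeasurableSet {ω | Y c ω = true} := by
    intro c; rw [hTc c]
    exact (measurable_pi_lambda (fun ω (v : (S c : Finset ι')) => R v.1 ω)
      (fun v => hmeas v.1)) .of_discrete
  have hp1 : ∀ c, νs ≤ p c := fun c =>
    (ENNReal.ofReal_le_iff_le_toReal (measure_ne_top _ _)).mp (hY c)
  have hp2 : ∀ c, p c ≤ 1 := fun c => by
    rw [hp]
    exact ENNReal.toReal_le_of_le_ofReal zero_le_one (by simpa using prob_le_one)
  have haR1 : 1 - α ≤ aR := by
    have hc : {ω | R n ω = false} = {ω | R n ω = true}ᶜ := by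
      ext ω; simp only [Set.mem_setOf_eq, Set.mem_compl_iff]; cases R n ω <;> simp
    have hms : MeasurableSet {ω | R n ω = true} := hmeas n (MeasurableSet.singleton true)
    have : ℙ {ω | R n ω = false} = 1 - ℙ {ω | R n ω = true} := by
      rw [hc, prob_compl_eq_one_sub hms]
    rw [haRdef, this, ENNReal.toReal_sub_of_le prob_le_one ENNReal.one_ne_top,
      ENNReal.toReal_one]
    have : (ℙ {ω | R n ω = true}).toReal ≤ α :=
      ENNReal.toReal_le_of_le_ofReal hα0 hα
    linarith
  have haR0 : 0 ≤ aR := ENNReal.toReal_nonneg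
  have hEval : ∀ (b : Fin d → Bool) c,
      (ℙ (E b (some c))).toReal = if b c = true then p c else 1 - p c := by
    intro b c
    cases hbc : b c with
    | true =>
      rw [hEsomeT b c hbc]; simp [hp]
    | false =>
      rw [hEsomeF b c hbc, prob_compl_eq_one_sub (hYmeas c),
        ENNReal.toReal_sub_of_le prob_le_one ENNReal.one_ne_top, ENNReal.toReal_one]
      simp [hp]
  set f : (Fin d → Bool) → ℝ := fun b => aR * ∏ c, (if b c = true then p c else 1 - p c)
    with hf
  have hAval : ∀ b, (ℙ (A b)).toReal = f b := by
    intro b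
    rw [hAprod b, ENNReal.toReal_mul, ENNReal.toReal_prod, hf]
    congr 1
    exact Finset.prod_congr rfl fun c _ => hEval b c
  have hfnonneg : ∀ b, 0 ≤ f b := by
    intro b
    refine mul_nonneg haR0 (Finset.prod_nonneg fun c _ => ?_)
    by_cases hbc : b c = true
    · rw [if_pos hbc]; linarith [hp1 c, hνs0]
    · rw [if_neg hbc]; linarith [hp2 c]
  -- the two special families of b's
  set bT : Fin d → Bool := fun _ => true with hbT
  set bF : Fin d → (Fin d → Bool) := fun c => Function.update bT c false with hbF
  set B0 : Finset (Fin d → Bool) := insert bT (Finset.univ.image bF) with hB0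
  have hbFne : ∀ c, bF c ≠ bT := by
    intro c hcontra
    have := congrFun hcontra c
    simp only [hbF, hbT, Function.update_self] at this
    exact Bool.noConfusion this
  have hbFinj : ∀ c c', bF c = bF c' → c = c' := by
    intro c c' hcc
    by_contra hne
    have := congrFun hcc c
    simp only [hbF, hbT, Function.update_self, Function.update_of_ne hne] at this
    exact Bool.noConfusion this
  have hB0sub : B0 ⊆ Bset := by
    intro b hb
    rw [hB0, Finset.mem_insert] at hb
    rw [hBset, Finset.mem_filter]
    refine ⟨Finset.mem_univ _, ?_⟩
    rcases hb with hb | hb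
    · subst hb
      rw [Finset.filter_true_of_mem (fun c _ => rfl), Finset.card_univ, Fintype.card_fin]
      omega
    · obtain ⟨c0, _, hc0⟩ := Finset.mem_image.mp hb
      subst hc0
      have : (Finset.univ.filter fun c => bF c0 c = true) = Finset.univ.erase c0 := by
        ext c
        simp only [Finset.mem_filter, Finset.mem_univ, true_and, Finset.mem_erase, and_true]
        rw [hbF]
        by_cases hc : c = c0
        · subst hc; simp [Function.update_self]
        · simp [Function.update_of_ne hc, hbT, hc]
      rw [this, Finset.card_erase_of_mem (Finset.mem_univ _), Finset.card_univ,
        Fintype.card_fin]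
  have hsumB0 : ∑ b ∈ B0, f b = aR * hFun p := by
    rw [hB0, Finset.sum_insert (by
      rw [Finset.mem_image]; rintro ⟨c, _, hc⟩; exact hbFne c hc)]
    rw [Finset.sum_image (fun c _ c' _ h => hbFinj c c' h)]
    have h1 : f bT = aR * ∏ c, p c := by
      simp [hf, hbT]
    have h2 : ∀ c0, f (bF c0) = aR * ((1 - p c0) * ∏ c ∈ Finset.univ.erase c0, p c) := by
      intro c0
      have hsplit : (∏ c, (if bF c0 c = true then p c else 1 - p c))
          = (1 - p c0) * ∏ c ∈ Finset.univ.erase c0, p c := by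
        rw [← Finset.mul_prod_erase Finset.univ
          (fun c => if bF c0 c = true then p c else 1 - p c) (Finset.mem_univ c0)]
        congr 1
        · simp [hbF, hbT, Function.update_self]
        · refine Finset.prod_congr rfl fun c hc => by
            simp [hbF, hbT, Function.update_of_ne (Finset.ne_of_mem_erase hc)]
      simp only [hf]
      rw [hsplit]
    rw [h1]
    rw [Finset.sum_congr rfl (fun c0 _ => h2 c0), ← Finset.mul_sum, hFun, ← mul_add]
  -- put everything together
  rw [ENNReal.ofReal_le_iff_le_toReal (measure_ne_top _ _)]
  have htR : (ℙ {ω | R n ω = false ∧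
        d - 1 ≤ (Finset.univ.filter fun c => Y c ω = true).card}).toReal
      = ∑ b ∈ Bset, f b := by
    rw [hfull, measure_biUnion_finset hdisjA (fun b _ => hAmeas b),
      ENNReal.toReal_sum (fun b _ => measure_ne_top _ _)]
    exact Finset.sum_congr rfl fun b _ => hAval b
  rw [htR]
  have hchain1 : νs ≤ aR * hFun p := by
    have hgmono := hFun_mono νs hνs0.le hνs1.le p hp1 hp2
    rw [hFun_const] at hgmono
    have hg0 : 0 ≤ νs ^ d + d * νs ^ (d - 1) * (1 - νs) := by
      nlinarith [hrec, hνs0, hα1]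
    nlinarith [hgmono, haR1, haR0, hg0, hrec]
  calc νs ≤ aR * hFun p := hchain1
    _ = ∑ b ∈ B0, f b := hsumB0.symm
    _ ≤ ∑ b ∈ Bset, f b :=
        Finset.sum_le_sum_of_subset_of_nonneg hB0sub (fun b _ _ => hfnonneg b)

lemma key_bound {Ω : Type*} [MeasureSpace Ω] [IsProbabilityMeasure (ℙ : Measure Ω)]
    (d H : ℕ) (α νs : ℝ) (hα0 : 0 ≤ α) (hα1 : α ≤ 1)
    (hνs0 : 0 < νs) (hνs1 : νs < 1)
    (hrec : (1 - α) * (νs ^ d + d * νs ^ (d - 1) * (1 - νs)) ≥ νs)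
    (R : TIdx d H → Ω → Bool)
    (hmeas : ∀ v, Measurable (R v))
    (hindep : iIndepFun R ℙ)
    (hprob : ∀ v, ℙ {ω | R v ω = true} ≤ ENNReal.ofReal α) :
    ∀ fuel j (path : Fin j → Fin d),
      ENNReal.ofReal νs ≤ ℙ {ω | stableData d H (fun v => R v ω) fuel j path = true} := by
  intro fuel
  induction fuel with
  | zero =>
    intro j path
    have : {ω : Ω | stableData d H (fun v => R v ω) 0 j path = true} = Set.univ := by
      ext ω; simp [stableData]
    rw [this, measure_univ]
    exact ENNReal.ofReal_le_one.mpr hνs1.le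
  | succ fuel IH =>
    intro j path
    by_cases h : j < H
    · set node : TIdx d H := ⟨⟨j, h⟩, path⟩ with hnode
      have hfull : {ω : Ω | stableData d H (fun v => R v ω) (fuel + 1) j path = true}
          = {ω | R node ω = false ∧ d - 1 ≤ (Finset.univ.filter fun c : Fin d =>
              (fun ω => stableData d H (fun v => R v ω) fuel (j + 1) (Fin.snoc path c)) ω
                = true).card} := by
        ext ω
        simp only [Set.mem_setOf_eq, stableData, dif_pos h, Bool.and_eq_true,
          Bool.not_eq_true', decide_eq_true_eq, hnode]
      rw [hfull]
      have hn : ∀ c : Fin d, node ∉ subtree d H fuel (j + 1) (Fin.snoc path c) := by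
        intro c hc
        have := (mem_subtree.mp hc).1
        simp only [hnode] at this
        omega
      have hdisj : ∀ c c' : Fin d, c ≠ c' →
          Disjoint (subtree d H fuel (j + 1) (Fin.snoc path c))
            (subtree d H fuel (j + 1) (Fin.snoc path c')) := by
        intro c c' hcc
        rw [Finset.disjoint_left]
        intro v hv hv'
        have h1 : j < (v.1 : ℕ) := by
          have := (mem_subtree.mp hv).1; omega
        exact hcc ((subtree_coord hv h1).symm.trans (subtree_coord hv' h1))
      have hrep : ∀ c : Fin d,
          {ω : Ω | (fun ω => stableData d H (fun v => R v ω) fuel (j + 1) (Fin.snoc path c)) ω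
            = true}
          = (fun ω (v : (subtree d H fuel (j + 1) (Fin.snoc path c) : Finset (TIdx d H)))
              => R v.1 ω) ⁻¹' {x | stableData d H
                (fun v => if hv : v ∈ subtree d H fuel (j + 1) (Fin.snoc path c)
                  then x ⟨v, hv⟩ else false) fuel (j + 1) (Fin.snoc path c) = true} := by
        intro c
        have hagree : ∀ ω : Ω, stableData d H
            (fun v => if hv : v ∈ subtree d H fuel (j + 1) (Fin.snoc path c)
              then R v ω else false) fuel (j + 1) (Fin.snoc path c)
            = stableData d H (fun v => R v ω) fuel (j + 1) (Fin.snoc path c) :=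
          fun ω => stableData_congr _ _ _ (fun v hv => dif_pos hv)
        ext ω
        simp only [Set.mem_setOf_eq, Set.mem_preimage]
        exact (iff_of_eq (congrArg (fun b => b = true) (hagree ω))).symm
      exact step_bound d R hmeas hindep node _ hn hdisj _ (fun c => ⟨_, hrep c⟩)
        α νs hα0 hα1 hνs0 hνs1 hrec (hprob node)
        (fun c => IH (j + 1) (Fin.snoc path c))
    · have : {ω : Ω | stableData d H (fun v => R v ω) (fuel + 1) j path = true}
          = Set.univ := by
        ext ω; simp [stableData, h]
      rw [this, measure_univ]
      exact ENNReal.ofReal_le_one.mpr hνs1.le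

/-- On a d-ary tree of height H where internal nodes are independently
radioactive with probability at most α, if ν* ∈ (0,1) satisfies g(ν*) > ν* and
(1-α)·g(ν*) ≥ ν* where g(ν) = ν^d + dν^{d-1}(1-ν), then the root is the father of a
(d-1)-ary stable subtree with probability at least ν*. -/
theorem stmt15 {Ω : Type*} [MeasureSpace Ω] [IsProbabilityMeasure (ℙ : Measure Ω)]
    (d H : ℕ) (hd : 3 ≤ d) (α νs : ℝ) (hα0 : 0 ≤ α) (hα1 : α ≤ 1)
    (hνs0 : 0 < νs) (hνs1 : νs < 1)
    (hg : νs ^ d + d * νs ^ (d - 1) * (1 - νs) > νs)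
    (hrec : (1 - α) * (νs ^ d + d * νs ^ (d - 1) * (1 - νs)) ≥ νs)
    (R : (Σ j : Fin H, (Fin (j : ℕ) → Fin d)) → Ω → Bool)
    (hmeas : ∀ v, Measurable (R v))
    (hindep : iIndepFun R ℙ)
    (hprob : ∀ v, ℙ {ω | R v ω = true} ≤ ENNReal.ofReal α) :
    ℙ {ω | stableAux d H R ω H 0 Fin.elim0 = true} ≥ ENNReal.ofReal νs := by
  have heq : {ω : Ω | stableAux d H R ω H 0 Fin.elim0 = true}
      = {ω | stableData d H (fun v => R v ω) H 0 Fin.elim0 = true} := by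
    ext ω; simp only [Set.mem_setOf_eq]; rw [stableAux_eq]
  rw [ge_iff_le, heq]
  exact key_bound d H α νs hα0 hα1 hνs0 hνs1 hrec R hmeas hindep hprob H 0 Fin.elim0
end

section
/- In the same branching process setup, if each node is radioactive with probability at most α = 1/h(n) where h(n) → ∞, then for all sufficiently large n the root is the father of a (d-1)-ary stable subtree with probability at least 1 - 1/√h(n). -/
open MeasureTheory ProbabilityTheory

/-- The set of nodes that are (weak) descendants of the node at depth `j` reached
by `path`. -/
def descSet (d H : ℕ) (j : ℕ) (path : Fin j → Fin d) :
    Set (Σ j : Fin H, (Fin (j : ℕ) → Fin d)) :=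
  {v | ∃ hle : j ≤ (v.1 : ℕ), ∀ i : Fin j, v.2 (Fin.castLE hle i) = path i}

lemma descSet_child_subset (d H : ℕ) (j : ℕ) (path : Fin j → Fin d) (c : Fin d) :
    descSet d H (j + 1) (Fin.snoc path c) ⊆ descSet d H j path := by
  rintro v ⟨hle, hv⟩
  refine ⟨by omega, fun i => ?_⟩
  have h1 := hv (Fin.castSucc i)
  rw [Fin.snoc_castSucc] at h1
  have h2 : Fin.castLE (show j ≤ (v.1 : ℕ) by omega) i
      = Fin.castLE hle (Fin.castSucc i) := by
    apply Fin.ext; rfl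
  rw [h2]; exact h1

lemma root_mem_descSet (d H : ℕ) (j : ℕ) (hj : j < H) (path : Fin j → Fin d) :
    (⟨⟨j, hj⟩, path⟩ : Σ j : Fin H, (Fin (j : ℕ) → Fin d)) ∈ descSet d H j path :=
  ⟨le_rfl, fun _ => rfl⟩

lemma descSet_disjoint (d H : ℕ) (j : ℕ) (path : Fin j → Fin d) {c c' : Fin d}
    (hcc : c ≠ c') :
    Disjoint (descSet d H (j + 1) (Fin.snoc path c))
      (descSet d H (j + 1) (Fin.snoc path c')) := by
  rw [Set.disjoint_left]
  rintro v ⟨hle, hv⟩ ⟨hle', hv'⟩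
  have h1 := hv (Fin.last j)
  have h2 := hv' (Fin.last j)
  rw [Fin.snoc_last] at h1 h2
  have h3 : Fin.castLE hle (Fin.last j) = Fin.castLE hle' (Fin.last j) := by
    apply Fin.ext; rfl
  rw [h3, h2] at h1
  exact hcc h1.symm

/-- The σ-algebra generated by the indicators of descendants of a node. -/
def mDesc {Ω : Type*} (d H : ℕ)
    (R : (Σ j : Fin H, (Fin (j : ℕ) → Fin d)) → Ω → Bool)
    (j : ℕ) (path : Fin j → Fin d) : MeasurableSpace Ω :=
  ⨆ v ∈ descSet d H j path, MeasurableSpace.comap (R v) inferInstance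

lemma stableAux_measurable_mDesc {Ω : Type*} (d H : ℕ)
    (R : (Σ j : Fin H, (Fin (j : ℕ) → Fin d)) → Ω → Bool) :
    ∀ (f j : ℕ) (path : Fin j → Fin d),
      Measurable[mDesc d H R j path] (fun ω => stableAux d H R ω f j path) := by
  intro f
  induction f with
  | zero =>
      intro j path
      letI : MeasurableSpace Ω := mDesc d H R j path
      simp only [stableAux]
      exact measurable_const
  | succ f ih =>
      intro j path
      letI : MeasurableSpace Ω := mDesc d H R j path
      by_cases hj : j < H
      · have key : (fun ω => stableAux d H R ω (f + 1) j path)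
            = (fun p : Bool × (Fin d → Bool) =>
                !p.1 && decide (d - 1 ≤ (Finset.univ.filter fun c : Fin d =>
                  p.2 c = true).card)) ∘
              (fun ω => (R ⟨⟨j, hj⟩, path⟩ ω,
                fun c : Fin d => stableAux d H R ω f (j + 1) (Fin.snoc path c))) := by
          funext ω
          simp only [stableAux, dif_pos hj, Function.comp_apply]
        rw [key]
        have hF : Measurable (fun p : Bool × (Fin d → Bool) =>
            !p.1 && decide (d - 1 ≤ (Finset.univ.filter fun c : Fin d =>
              p.2 c = true).card)) := measurable_of_countable _
        refine hF.comp ?_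
        refine Measurable.prodMk ?_ ?_
        · have h1 : Measurable[MeasurableSpace.comap (R ⟨⟨j, hj⟩, path⟩) inferInstance]
              (R ⟨⟨j, hj⟩, path⟩) := comap_measurable _
          exact h1.mono (le_iSup₂ (f := fun v (_ : v ∈ descSet d H j path) =>
            MeasurableSpace.comap (R v) inferInstance) _
            (root_mem_descSet d H j hj path)) le_rfl
        · refine measurable_pi_lambda _ (fun c => ?_)
          have h1 := ih (j + 1) (Fin.snoc path c)
          refine h1.mono ?_ le_rfl
          exact iSup_le fun v => iSup_le fun hv =>
            le_iSup₂ (f := fun v (_ : v ∈ descSet d H j path) =>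
              MeasurableSpace.comap (R v) inferInstance) v
              (descSet_child_subset d H j path c hv)
      · have key : (fun ω => stableAux d H R ω (f + 1) j path) = fun _ => true := by
          funext ω; simp only [stableAux, dif_neg hj]
        rw [key]
        exact measurable_const

lemma mDesc_le {Ω : Type*} [m0 : MeasurableSpace Ω] (d H : ℕ)
    (R : (Σ j : Fin H, (Fin (j : ℕ) → Fin d)) → Ω → Bool)
    (hmeas : ∀ v, Measurable (R v)) (j : ℕ) (path : Fin j → Fin d) :
    mDesc d H R j path ≤ m0 :=
  iSup_le fun v => iSup_le fun _ => (hmeas v).comap_le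

lemma unstable_bound {Ω : Type*} [MeasureSpace Ω]
    [IsProbabilityMeasure (ℙ : Measure Ω)] (d H : ℕ) (hd : 3 ≤ d)
    (R : (Σ j : Fin H, (Fin (j : ℕ) → Fin d)) → Ω → Bool)
    (hmeas : ∀ v, Measurable (R v))
    (hindep : iIndepFun R ℙ)
    (α ε : ENNReal)
    (hα : ∀ v, ℙ {ω | R v ω = true} ≤ α)
    (hrec : α + (d * d : ℕ) * (ε * ε) ≤ ε) :
    ∀ (f j : ℕ) (path : Fin j → Fin d),
      ℙ {ω | stableAux d H R ω f j path = false} ≤ ε := by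
  intro f
  induction f with
  | zero =>
      intro j path
      have : {ω : Ω | stableAux d H R ω 0 j path = false} = ∅ := by
        ext ω; simp [stableAux]
      rw [this, measure_empty]
      exact zero_le
  | succ f ih =>
      intro j path
      by_cases hj : j < H
      · set A : Fin d → Set Ω :=
          fun c => {ω | stableAux d H R ω f (j + 1) (Fin.snoc path c) = false} with hA
        have hAmeas : ∀ c, MeasurableSet[mDesc d H R (j + 1) (Fin.snoc path c)] (A c) := by
          intro c
          exact stableAux_measurable_mDesc d H R f (j + 1) (Fin.snoc path c)
            (show MeasurableSet ({false} : Set Bool) from trivial)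
        have hsub : {ω : Ω | stableAux d H R ω (f + 1) j path = false} ⊆
            {ω | R ⟨⟨j, hj⟩, path⟩ ω = true} ∪
              ⋃ (p : Fin d × Fin d), ⋃ (_ : p.1 ≠ p.2), A p.1 ∩ A p.2 := by
          intro ω hω
          simp only [Set.mem_setOf_eq, stableAux, dif_pos hj, Bool.and_eq_false_iff,
            Bool.not_eq_false', decide_eq_false_iff_not, not_le] at hω
          rcases hω with hω | hω
          · exact Or.inl hω
          · right
            have hcard : 1 < (Finset.univ.filter fun c : Fin d =>
                stableAux d H R ω f (j + 1) (Fin.snoc path c) = false).card := by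
              have hsplit := Finset.card_filter_add_card_filter_not
                (s := (Finset.univ : Finset (Fin d)))
                (p := fun c : Fin d =>
                  stableAux d H R ω f (j + 1) (Fin.snoc path c) = true)
              have heq : (Finset.univ.filter fun c : Fin d =>
                  ¬ stableAux d H R ω f (j + 1) (Fin.snoc path c) = true)
                  = (Finset.univ.filter fun c : Fin d =>
                    stableAux d H R ω f (j + 1) (Fin.snoc path c) = false) := by
                apply Finset.filter_congr
                intro c _
                simp [Bool.not_eq_true]
              rw [heq] at hsplit
              have hu : (Finset.univ : Finset (Fin d)).card = d := by simp
              omega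
            obtain ⟨a, ha, b, hb, hab⟩ := Finset.one_lt_card.1 hcard
            refine Set.mem_iUnion.2 ⟨(a, b), Set.mem_iUnion.2 ⟨hab, ?_, ?_⟩⟩
            · simpa [hA] using (Finset.mem_filter.1 ha).2
            · simpa [hA] using (Finset.mem_filter.1 hb).2
        have hpair : ∀ p : Fin d × Fin d,
            ℙ (⋃ (_ : p.1 ≠ p.2), A p.1 ∩ A p.2) ≤ ε * ε := by
          intro p
          by_cases hp : p.1 = p.2
          · have : (⋃ (_ : p.1 ≠ p.2), A p.1 ∩ A p.2) = ∅ := by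
              simp [hp]
            rw [this, measure_empty]; exact zero_le
          · have hind : Indep (mDesc d H R (j + 1) (Fin.snoc path p.1))
                (mDesc d H R (j + 1) (Fin.snoc path p.2)) ℙ := by
              exact indep_iSup_of_disjoint (fun v => (hmeas v).comap_le) hindep
                (descSet_disjoint d H j path hp)
            have hmul := (Indep_iff _ _ _).1 hind (A p.1) (A p.2)
              (hAmeas p.1) (hAmeas p.2)
            refine le_trans (measure_mono (Set.iUnion_subset fun _ => subset_rfl)) ?_
            rw [hmul]
            exact mul_le_mul' (ih (j + 1) (Fin.snoc path p.1))
              (ih (j + 1) (Fin.snoc path p.2))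
        calc ℙ {ω : Ω | stableAux d H R ω (f + 1) j path = false}
            ≤ ℙ ({ω | R ⟨⟨j, hj⟩, path⟩ ω = true} ∪
              ⋃ (p : Fin d × Fin d), ⋃ (_ : p.1 ≠ p.2), A p.1 ∩ A p.2) :=
              measure_mono hsub
          _ ≤ ℙ {ω | R ⟨⟨j, hj⟩, path⟩ ω = true} +
              ℙ (⋃ (p : Fin d × Fin d), ⋃ (_ : p.1 ≠ p.2), A p.1 ∩ A p.2) :=
              measure_union_le _ _
          _ ≤ α + (d * d : ℕ) * (ε * ε) := by
              refine add_le_add (hα _) ?_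
              calc ℙ (⋃ (p : Fin d × Fin d), ⋃ (_ : p.1 ≠ p.2), A p.1 ∩ A p.2)
                  ≤ ∑' p : Fin d × Fin d, ℙ (⋃ (_ : p.1 ≠ p.2), A p.1 ∩ A p.2) :=
                    measure_iUnion_le _
                _ = ∑ p : Fin d × Fin d, ℙ (⋃ (_ : p.1 ≠ p.2), A p.1 ∩ A p.2) :=
                    tsum_fintype _
                _ ≤ (Finset.univ : Finset (Fin d × Fin d)).card • (ε * ε) :=
                    Finset.sum_le_card_nsmul _ _ _ (fun p _ => hpair p)
                _ = (d * d : ℕ) * (ε * ε) := by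
                    simp [nsmul_eq_mul]
          _ ≤ ε := hrec
      · have : {ω : Ω | stableAux d H R ω (f + 1) j path = false} = ∅ := by
          ext ω; simp [stableAux, dif_neg hj]
        rw [this, measure_empty]
        exact zero_le

/-- In the same branching process setup, if each internal node is
independently radioactive with probability at most α = 1/h(n) where h(n) → ∞, then for
all sufficiently large n the root is the father of a (d-1)-ary stable subtree with
probability at least 1 - 1/√h(n). -/
theorem stmt16 (d : ℕ) (hd : 3 ≤ d) (h : ℕ → ℝ)
    (hh : Filter.Tendsto h Filter.atTop Filter.atTop)
    (Ω : ℕ → Type) (ms : ∀ n, MeasureSpace (Ω n))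
    (hprobm : ∀ n, IsProbabilityMeasure (ℙ : Measure (Ω n)))
    (H : ℕ → ℕ)
    (R : ∀ n, (Σ j : Fin (H n), (Fin (j : ℕ) → Fin d)) → Ω n → Bool)
    (hmeas : ∀ n v, Measurable (R n v))
    (hindep : ∀ n, iIndepFun (R n) ℙ)
    (hα : ∀ n, 0 < h n → ∀ v, ℙ {ω | R n v ω = true} ≤ ENNReal.ofReal (1 / h n)) :
    ∃ N : ℕ, ∀ n : ℕ, N ≤ n →
      ℙ {ω | stableAux d (H n) (R n) ω (H n) 0 Fin.elim0 = true}
        ≥ 1 - ENNReal.ofReal (1 / Real.sqrt (h n)) := by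
  have hC : (0:ℝ) < (1 + d * d : ℕ) := by positivity
  obtain ⟨N, hN⟩ := Filter.eventually_atTop.1
    ((Filter.tendsto_atTop.1 hh) (((1 + d * d : ℕ) : ℝ) ^ 2))
  refine ⟨N, fun n hn => ?_⟩
  haveI := hprobm n
  have hhn : ((1 + d * d : ℕ) : ℝ) ^ 2 ≤ h n := hN n hn
  have hhpos : 0 < h n := lt_of_lt_of_le (by positivity) hhn
  have hsqrt_pos : 0 < Real.sqrt (h n) := Real.sqrt_pos.2 hhpos
  have hsqrt_ge : ((1 + d * d : ℕ) : ℝ) ≤ Real.sqrt (h n) := by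
    have := Real.sqrt_le_sqrt hhn
    rwa [Real.sqrt_sq hC.le] at this
  set α : ENNReal := ENNReal.ofReal (1 / h n)
  set ε : ENNReal := ENNReal.ofReal (1 / Real.sqrt (h n))
  have hεε : ε * ε = α := by
    rw [← ENNReal.ofReal_mul (by positivity)]
    congr 1
    rw [div_mul_div_comm, one_mul, Real.mul_self_sqrt hhpos.le]
  have hrec : α + (d * d : ℕ) * (ε * ε) ≤ ε := by
    rw [hεε]
    have h1 : ((d * d : ℕ) : ENNReal) * α = ENNReal.ofReal ((d * d : ℕ) * (1 / h n)) := by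
      rw [← ENNReal.ofReal_natCast (d * d), ← ENNReal.ofReal_mul (by positivity)]
    have h2 : α + ((d * d : ℕ) : ENNReal) * α
        = ENNReal.ofReal ((1 + d * d : ℕ) * (1 / h n)) := by
      rw [h1, ← ENNReal.ofReal_add (by positivity) (by positivity)]
      congr 1
      push_cast
      ring
    rw [h2]
    apply ENNReal.ofReal_le_ofReal
    rw [mul_one_div, div_le_div_iff₀ hhpos hsqrt_pos, one_mul]
    calc ((1 + d * d : ℕ) : ℝ) * Real.sqrt (h n)
        ≤ Real.sqrt (h n) * Real.sqrt (h n) :=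
          mul_le_mul_of_nonneg_right hsqrt_ge hsqrt_pos.le
      _ = h n := Real.mul_self_sqrt hhpos.le
  have hbound := unstable_bound d (H n) hd (R n) (hmeas n) (hindep n) α ε
    (hα n hhpos) hrec (H n) 0 Fin.elim0
  have hSmeas : MeasurableSet
      {ω | stableAux d (H n) (R n) ω (H n) 0 Fin.elim0 = true} := by
    have hm := (stableAux_measurable_mDesc d (H n) (R n) (H n) 0 Fin.elim0).mono
      (mDesc_le d (H n) (R n) (hmeas n) 0 Fin.elim0) le_rfl
    exact hm (show MeasurableSet ({true} : Set Bool) from trivial)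
  have hcompl : {ω | stableAux d (H n) (R n) ω (H n) 0 Fin.elim0 = true}ᶜ
      = {ω | stableAux d (H n) (R n) ω (H n) 0 Fin.elim0 = false} := by
    ext ω
    simp [Bool.not_eq_true]
  have h1 : (1 : ENNReal) ≤
      ℙ {ω | stableAux d (H n) (R n) ω (H n) 0 Fin.elim0 = true} + ε := by
    have := prob_add_prob_compl (μ := (ℙ : Measure (Ω n))) hSmeas
    rw [hcompl] at this
    calc (1 : ENNReal)
        = ℙ {ω | stableAux d (H n) (R n) ω (H n) 0 Fin.elim0 = true} +
          ℙ {ω | stableAux d (H n) (R n) ω (H n) 0 Fin.elim0 = false} := this.symm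
      _ ≤ _ := add_le_add le_rfl hbound
  exact tsub_le_iff_right.2 h1
end
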